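/- For λ>0, l∈ℕ, r∈ℝ, the function φ'_{λ,l,r}(x,t) = cos(λt+rx₃)·𝓛_l((λ/2)(x₁²+x₂²)) on ℝ³×ℝ satisfies the eigenvalue equations L'φ' = (λ(2l+1)+r²)·φ', Δ'φ' = λ²·φ', and D'φ' = λr·φ', where L' = −((∂_{x₁} − ½x₂∂_t)² + (∂_{x₂} + ½x₁∂_t)² + ∂_{x₃}²), Δ' = −∂_t², and D' = −∂_{x₃}∂_t. -/

import Mathlib

open MeasureTheory Complex Matrix

noncomputable section

/-- The Laguerre function of order 0: `𝓛_l(u) = (1/l!) e^{u/2} (d/du)^l (u^l e^{-u})`. -/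
def lag (l : ℕ) (u : ℝ) : ℝ :=
  (l.factorial : ℝ)⁻¹ * Real.exp (u / 2) * deriv^[l] (fun v : ℝ => v ^ l * Real.exp (-v)) u

/-- The regular bounded spherical functions of `(K' ⋉ N', K')`:
`φ'_{λ,l,r}(x,t) = cos(λt + r x₃) · 𝓛_l((λ/2)(x₁² + x₂²))`. -/
def sph' (lam : ℝ) (l : ℕ) (r : ℝ) (p : (Fin 3 → ℝ) × ℝ) : ℝ :=
  Real.cos (lam * p.2 + r * p.1 2) * lag l (lam / 2 * ((p.1 0) ^ 2 + (p.1 1) ^ 2))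

/-- The Bessel function of order 0: `J₀(z) = (1/π) ∫₀^π cos(z sin θ) dθ`. -/
def J0 (z : ℝ) : ℝ := (1 / Real.pi) * ∫ θ in (0:ℝ)..Real.pi, Real.cos (z * Real.sin θ)

/-- The singular bounded spherical functions of `(K' ⋉ N', K')`:
`φ'_{ζ,r}(x,t) = J₀(ζ √(x₁² + x₂²)) · cos(r x₃)`. -/
def sphSing' (zeta r : ℝ) (p : (Fin 3 → ℝ) × ℝ) : ℝ :=
  J0 (zeta * Real.sqrt ((p.1 0) ^ 2 + (p.1 1) ^ 2)) * Real.cos (r * p.1 2)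


/-- Partial derivative in the variable `x_j` of a function on `ℝ³ × ℝ`. -/
def pdx' (j : Fin 3) (g : (Fin 3 → ℝ) × ℝ → ℝ) : (Fin 3 → ℝ) × ℝ → ℝ :=
  fun p => fderiv ℝ g p (Pi.single j 1, 0)

/-- Partial derivative in the variable `t` of a function on `ℝ³ × ℝ`. -/
def pdt (g : (Fin 3 → ℝ) × ℝ → ℝ) : (Fin 3 → ℝ) × ℝ → ℝ :=
  fun p => fderiv ℝ g p (0, 1)

/-- The left-invariant vector field `X'₁ = ∂_{x₁} − ½ x₂ ∂_t` on `N'`. -/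
def X1' (g : (Fin 3 → ℝ) × ℝ → ℝ) : (Fin 3 → ℝ) × ℝ → ℝ :=
  fun p => pdx' 0 g p - (1 / 2) * p.1 1 * pdt g p

/-- The left-invariant vector field `X'₂ = ∂_{x₂} + ½ x₁ ∂_t` on `N'`. -/
def X2' (g : (Fin 3 → ℝ) × ℝ → ℝ) : (Fin 3 → ℝ) × ℝ → ℝ :=
  fun p => pdx' 1 g p + (1 / 2) * p.1 0 * pdt g p

/-- The sub-Laplacian `L' = −(X'₁² + X'₂² + ∂_{x₃}²)` on `N'`. -/
def Lp (g : (Fin 3 → ℝ) × ℝ → ℝ) : (Fin 3 → ℝ) × ℝ → ℝ :=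
  fun p => -(X1' (X1' g) p + X2' (X2' g) p + pdx' 2 (pdx' 2 g) p)

/-- The central Laplacian `Δ' = −∂_t²` on `N'`. -/
def Deltap (g : (Fin 3 → ℝ) × ℝ → ℝ) : (Fin 3 → ℝ) × ℝ → ℝ :=
  fun p => -(pdt (pdt g) p)

/-- The operator `D' = −∂_{x₃}∂_t` on `N'`. -/
def Dp (g : (Fin 3 → ℝ) × ℝ → ℝ) : (Fin 3 → ℝ) × ℝ → ℝ :=
  fun p => -(pdx' 2 (pdt g) p)

/-! ### Auxiliary: Rodrigues polynomials for Laguerre functions -/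

open Polynomial in
/-- The polynomials `rod l n` with `(d/dx)^n (x^l e^{-x}) = (rod l n)(x) e^{-x}`. -/
def rod (l : ℕ) : ℕ → Polynomial ℝ
  | 0 => X ^ l
  | (n+1) => derivative (rod l n) - rod l n

open Polynomial in
lemma rod_iter (l : ℕ) : ∀ (n : ℕ) (x : ℝ),
    deriv^[n] (fun v : ℝ => v ^ l * Real.exp (-v)) x = (rod l n).eval x * Real.exp (-x) := by
  intro n
  induction n with
  | zero => intro x; simp [rod]
  | succ n ih =>
    intro x
    rw [Function.iterate_succ_apply']
    have he : deriv^[n] (fun v : ℝ => v ^ l * Real.exp (-v))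
        = fun x => (rod l n).eval x * Real.exp (-x) := funext ih
    rw [he]
    have h1 : HasDerivAt (fun x : ℝ => (rod l n).eval x * Real.exp (-x))
        ((derivative (rod l n)).eval x * Real.exp (-x)
          + (rod l n).eval x * (Real.exp (-x) * (-1))) x :=
      ((rod l n).hasDerivAt x).mul ((hasDerivAt_id x).neg.exp)
    rw [h1.deriv]
    simp [rod]
    ring

open Polynomial in
lemma rod_X_deriv (l : ℕ) : ∀ n : ℕ,
    X * derivative (rod l n) = (C (l:ℝ) - C (n:ℝ)) * rod l n - C (n:ℝ) * rod l (n-1) := by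
  intro n
  induction n with
  | zero =>
    cases l with
    | zero => simp [rod]
    | succ m =>
      simp only [rod, derivative_X_pow, Nat.cast_zero, _root_.map_zero, sub_zero, zero_mul]
      rw [Nat.succ_sub_one]
      rw [show (X:Polynomial ℝ) * (C ((m+1:ℕ):ℝ) * X ^ m) = C ((m+1:ℕ):ℝ) * X^(m+1) by ring]
  | succ n ih =>
    have hD := congrArg derivative ih
    simp only [derivative_mul, derivative_X, one_mul, derivative_sub, derivative_C, zero_mul,
      sub_zero] at hD
    have hd : C (n:ℝ) * derivative (rod l (n-1)) = C (n:ℝ) * (rod l n + rod l (n-1)) := by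
      cases n with
      | zero => simp
      | succ m =>
        congr 1
        rw [Nat.succ_sub_one]
        show derivative (rod l m) = rod l (m+1) + rod l m
        rw [show rod l (m+1) = derivative (rod l m) - rod l m from rfl]; ring
    have hr : rod l (n+1) = derivative (rod l n) - rod l n := rfl
    rw [hr, Nat.succ_sub_one]
    push_cast
    simp only [_root_.map_add, _root_.map_one]
    rw [derivative_sub]
    linear_combination hD - ih - hd

open Polynomial in
/-- The Laguerre ODE for the Rodrigues polynomial, in the `e^{-u/2}`-twisted form. -/
lemma ode_poly (l : ℕ) :
    X * ((derivative (derivative (rod l l) - C (2⁻¹:ℝ) * rod l l))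
        - C (2⁻¹:ℝ) * (derivative (rod l l) - C (2⁻¹:ℝ) * rod l l))
      + (derivative (rod l l) - C (2⁻¹:ℝ) * rod l l)
      + ((C (l:ℝ) + C (2⁻¹:ℝ)) - C (4⁻¹:ℝ) * X) * rod l l = 0 := by
  have hT := rod_X_deriv l (l+1)
  rw [Nat.succ_sub_one] at hT
  rw [show rod l (l+1) = derivative (rod l l) - rod l l from rfl] at hT
  push_cast at hT
  simp only [_root_.map_add, _root_.map_one, derivative_sub] at hT
  simp only [derivative_sub, derivative_mul, derivative_C, zero_mul, zero_add]
  have hC : (C (2⁻¹:ℝ)) * (C (2⁻¹:ℝ)) = C (4⁻¹:ℝ) := by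
    rw [← _root_.map_mul]; norm_num
  have h2 : (2 : Polynomial ℝ) * C (2⁻¹:ℝ) = 1 := by
    rw [show (2:Polynomial ℝ) = C (2:ℝ) from (_root_.map_ofNat C 2).symm, ← _root_.map_mul]; norm_num
  linear_combination hT - (X * derivative (rod l l)) * h2 + (X * rod l l) * hC

/-! ### The Laguerre function and its derivatives -/

open Polynomial in
/-- `q ↦ q' - q/2`, the twisted derivative. -/
def opH (q : Polynomial ℝ) : Polynomial ℝ := derivative q - C (2⁻¹:ℝ) * q

/-- `q(u) e^{-u/2}`. -/
def pexp (q : Polynomial ℝ) (u : ℝ) : ℝ := q.eval u * Real.exp (-(u/2))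

lemma hasDerivAt_pexp (q : Polynomial ℝ) (u : ℝ) :
    HasDerivAt (pexp q) (pexp (opH q) u) u := by
  have h : HasDerivAt (fun u : ℝ => q.eval u * Real.exp (-(u/2)))
      ((Polynomial.derivative q).eval u * Real.exp (-(u/2))
        + q.eval u * (Real.exp (-(u/2)) * -(1/2))) u :=
    (q.hasDerivAt u).mul (by simpa using (((hasDerivAt_id u).div_const 2).neg.exp))
  have h2 : HasDerivAt (pexp q) ((Polynomial.derivative q).eval u * Real.exp (-(u/2))
        + q.eval u * (Real.exp (-(u/2)) * -(1/2))) u := h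
  convert h2 using 1
  unfold pexp opH
  simp [Polynomial.eval_sub, Polynomial.eval_mul]
  ring

lemma lag_eq (l : ℕ) (u : ℝ) : lag l u = (l.factorial : ℝ)⁻¹ * pexp (rod l l) u := by
  unfold lag pexp
  rw [rod_iter l l u]
  rw [show Real.exp (-(u/2)) = Real.exp (u/2) * Real.exp (-u) by rw [← Real.exp_add]; ring_nf]
  ring

/-- First derivative of the Laguerre function. -/
def lagD (l : ℕ) (u : ℝ) : ℝ := (l.factorial : ℝ)⁻¹ * pexp (opH (rod l l)) u

/-- Second derivative of the Laguerre function. -/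
def lagDD (l : ℕ) (u : ℝ) : ℝ := (l.factorial : ℝ)⁻¹ * pexp (opH (opH (rod l l))) u

lemma hasDerivAt_lag (l : ℕ) (u : ℝ) : HasDerivAt (lag l) (lagD l u) u := by
  have h : lag l = fun u => (l.factorial : ℝ)⁻¹ * pexp (rod l l) u := funext (lag_eq l)
  rw [h]
  exact (hasDerivAt_pexp (rod l l) u).const_mul _

lemma hasDerivAt_lagD (l : ℕ) (u : ℝ) : HasDerivAt (lagD l) (lagDD l u) u :=
  (hasDerivAt_pexp (opH (rod l l)) u).const_mul _

@[fun_prop]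
lemma differentiable_lag (l : ℕ) : Differentiable ℝ (lag l) :=
  fun u => (hasDerivAt_lag l u).differentiableAt

@[fun_prop]
lemma differentiable_lagD (l : ℕ) : Differentiable ℝ (lagD l) :=
  fun u => (hasDerivAt_lagD l u).differentiableAt

open Polynomial in
/-- The Laguerre ODE for the Laguerre function. -/
lemma lag_ode (l : ℕ) (u : ℝ) :
    u * lagDD l u + lagD l u + (((l:ℝ) + 2⁻¹) - 4⁻¹ * u) * lag l u = 0 := by
  have h := congrArg (Polynomial.eval u) (ode_poly l)
  simp only [opH, _root_.map_sub, eval_add, eval_mul, eval_sub, eval_X, eval_C, eval_zero] at h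
  rw [lag_eq]
  simp only [lagDD, lagD, pexp, opH, _root_.map_sub, eval_add, eval_mul, eval_sub, eval_X, eval_C]
  linear_combination ((l.factorial : ℝ)⁻¹ * Real.exp (-(u/2))) * h

/-! ### Directional derivatives via line slices -/

lemma pd_line {g : (Fin 3 → ℝ) × ℝ → ℝ} {p : (Fin 3 → ℝ) × ℝ} (v : (Fin 3 → ℝ) × ℝ)
    (hg : DifferentiableAt ℝ g p) :
    fderiv ℝ g p v = deriv (fun s : ℝ => g (p + s • v)) 0 := by
  have hline : HasDerivAt (fun s : ℝ => p + s • v) v 0 := by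
    simpa using ((hasDerivAt_id (0:ℝ)).smul_const v).const_add p
  have h0 : HasFDerivAt g (fderiv ℝ g p) (p + (0:ℝ) • v) := by
    simpa using hg.hasFDerivAt
  have h1 := h0.comp_hasDerivAt 0 hline
  exact h1.deriv.symm

@[fun_prop]
lemma sph'_diff (lam : ℝ) (l : ℕ) (r : ℝ) : Differentiable ℝ (sph' lam l r) := by
  unfold sph'; fun_prop

/-! ### First-order derivatives of `sph'` -/

lemma pdt_sph (lam : ℝ) (l : ℕ) (r : ℝ) :
    pdt (sph' lam l r) = fun p =>
      -(lam * Real.sin (lam * p.2 + r * p.1 2)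
        * lag l (lam / 2 * ((p.1 0) ^ 2 + (p.1 1) ^ 2))) := by
  funext p
  unfold pdt
  rw [pd_line _ (by fun_prop)]
  have hfun : (fun s : ℝ => sph' lam l r (p + s • ((0 : Fin 3 → ℝ), (1:ℝ))))
      = fun s : ℝ => Real.cos (lam * (p.2 + s) + r * p.1 2)
        * lag l (lam / 2 * ((p.1 0) ^ 2 + (p.1 1) ^ 2)) := by
    funext s
    simp [sph', Prod.fst_add, Prod.snd_add, Prod.smul_fst, Prod.smul_snd, smul_eq_mul]
  rw [hfun]
  have h1 : HasDerivAt (fun s : ℝ => lam * (p.2 + s) + r * p.1 2) lam 0 := by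
    simpa using (((hasDerivAt_id (0:ℝ)).const_add p.2).const_mul lam).add_const (r * p.1 2)
  rw [(h1.cos.mul_const (lag l (lam / 2 * ((p.1 0) ^ 2 + (p.1 1) ^ 2)))).deriv]
  ring_nf

lemma pdx2_sph (lam : ℝ) (l : ℕ) (r : ℝ) :
    pdx' 2 (sph' lam l r) = fun p =>
      -(r * Real.sin (lam * p.2 + r * p.1 2)
        * lag l (lam / 2 * ((p.1 0) ^ 2 + (p.1 1) ^ 2))) := by
  funext p
  unfold pdx'
  rw [pd_line _ (by fun_prop)]
  have hfun : (fun s : ℝ => sph' lam l r (p + s • ((Pi.single 2 1 : Fin 3 → ℝ), (0:ℝ))))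
      = fun s : ℝ => Real.cos (lam * p.2 + r * (p.1 2 + s))
        * lag l (lam / 2 * ((p.1 0) ^ 2 + (p.1 1) ^ 2)) := by
    funext s
    simp [sph', Prod.fst_add, Prod.snd_add, Prod.smul_fst, Prod.smul_snd, smul_eq_mul,
      Pi.single_apply]
  rw [hfun]
  have h1 : HasDerivAt (fun s : ℝ => lam * p.2 + r * (p.1 2 + s)) r 0 := by
    simpa using ((((hasDerivAt_id (0:ℝ)).const_add (p.1 2)).const_mul r).const_add (lam * p.2))
  rw [(h1.cos.mul_const (lag l (lam / 2 * ((p.1 0) ^ 2 + (p.1 1) ^ 2)))).deriv]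
  ring_nf

lemma pdx0_sph (lam : ℝ) (l : ℕ) (r : ℝ) :
    pdx' 0 (sph' lam l r) = fun p =>
      lam * p.1 0 * Real.cos (lam * p.2 + r * p.1 2)
        * lagD l (lam / 2 * ((p.1 0) ^ 2 + (p.1 1) ^ 2)) := by
  funext p
  unfold pdx'
  rw [pd_line _ (by fun_prop)]
  have hfun : (fun s : ℝ => sph' lam l r (p + s • ((Pi.single 0 1 : Fin 3 → ℝ), (0:ℝ))))
      = fun s : ℝ => Real.cos (lam * p.2 + r * p.1 2)
        * lag l (lam / 2 * ((p.1 0 + s) ^ 2 + (p.1 1) ^ 2)) := by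
    funext s
    simp [sph', Prod.fst_add, Prod.snd_add, Prod.smul_fst, Prod.smul_snd, smul_eq_mul,
      Pi.single_apply]
  rw [hfun]
  have hU : HasDerivAt (fun s : ℝ => lam / 2 * ((p.1 0 + s) ^ 2 + (p.1 1) ^ 2))
      (lam / 2 * (2 * (p.1 0 + 0) ^ 1 * 1)) 0 :=
    ((((hasDerivAt_id (0:ℝ)).const_add (p.1 0)).pow 2).add_const ((p.1 1)^2)).const_mul (lam/2)
  have hL : HasDerivAt (fun s : ℝ => lag l (lam / 2 * ((p.1 0 + s) ^ 2 + (p.1 1) ^ 2)))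
      (lagD l (lam / 2 * ((p.1 0 + 0) ^ 2 + (p.1 1) ^ 2)) * (lam / 2 * (2 * (p.1 0 + 0) ^ 1 * 1)))
      0 := (hasDerivAt_lag l _).comp 0 hU
  rw [(hL.const_mul (Real.cos (lam * p.2 + r * p.1 2))).deriv]
  ring_nf

lemma pdx1_sph (lam : ℝ) (l : ℕ) (r : ℝ) :
    pdx' 1 (sph' lam l r) = fun p =>
      lam * p.1 1 * Real.cos (lam * p.2 + r * p.1 2)
        * lagD l (lam / 2 * ((p.1 0) ^ 2 + (p.1 1) ^ 2)) := by
  funext p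
  unfold pdx'
  rw [pd_line _ (by fun_prop)]
  have hfun : (fun s : ℝ => sph' lam l r (p + s • ((Pi.single 1 1 : Fin 3 → ℝ), (0:ℝ))))
      = fun s : ℝ => Real.cos (lam * p.2 + r * p.1 2)
        * lag l (lam / 2 * ((p.1 0) ^ 2 + (p.1 1 + s) ^ 2)) := by
    funext s
    simp [sph', Prod.fst_add, Prod.snd_add, Prod.smul_fst, Prod.smul_snd, smul_eq_mul,
      Pi.single_apply]
  rw [hfun]
  have hU : HasDerivAt (fun s : ℝ => lam / 2 * ((p.1 0) ^ 2 + (p.1 1 + s) ^ 2))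
      (lam / 2 * (2 * (p.1 1 + 0) ^ 1 * 1)) 0 := by
    have := ((((hasDerivAt_id (0:ℝ)).const_add (p.1 1)).pow 2).const_add ((p.1 0)^2)).const_mul
      (lam/2)
    simpa using this
  have hL : HasDerivAt (fun s : ℝ => lag l (lam / 2 * ((p.1 0) ^ 2 + (p.1 1 + s) ^ 2)))
      (lagD l (lam / 2 * ((p.1 0) ^ 2 + (p.1 1 + 0) ^ 2)) * (lam / 2 * (2 * (p.1 1 + 0) ^ 1 * 1)))
      0 := (hasDerivAt_lag l _).comp 0 hU
  rw [(hL.const_mul (Real.cos (lam * p.2 + r * p.1 2))).deriv]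
  ring_nf

/-! ### `X'₁` and `X'₂` applied to `sph'` -/

lemma X1_sph (lam : ℝ) (l : ℕ) (r : ℝ) :
    X1' (sph' lam l r) = fun p =>
      lam * p.1 0 * Real.cos (lam * p.2 + r * p.1 2)
          * lagD l (lam / 2 * ((p.1 0) ^ 2 + (p.1 1) ^ 2))
        + lam / 2 * p.1 1 * Real.sin (lam * p.2 + r * p.1 2)
          * lag l (lam / 2 * ((p.1 0) ^ 2 + (p.1 1) ^ 2)) := by
  funext p
  unfold X1'
  simp only [pdx0_sph, pdt_sph]
  ring

lemma X2_sph (lam : ℝ) (l : ℕ) (r : ℝ) :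
    X2' (sph' lam l r) = fun p =>
      lam * p.1 1 * Real.cos (lam * p.2 + r * p.1 2)
          * lagD l (lam / 2 * ((p.1 0) ^ 2 + (p.1 1) ^ 2))
        - lam / 2 * p.1 0 * Real.sin (lam * p.2 + r * p.1 2)
          * lag l (lam / 2 * ((p.1 0) ^ 2 + (p.1 1) ^ 2)) := by
  funext p
  unfold X2'
  simp only [pdx1_sph, pdt_sph]
  ring

/-! ### Second-order derivatives -/

lemma pdt_fA (lam : ℝ) (l : ℕ) (r : ℝ) (p : (Fin 3 → ℝ) × ℝ) :
    pdt (fun p =>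
      -(lam * Real.sin (lam * p.2 + r * p.1 2)
        * lag l (lam / 2 * ((p.1 0) ^ 2 + (p.1 1) ^ 2)))) p
      = -(lam ^ 2 * Real.cos (lam * p.2 + r * p.1 2)
        * lag l (lam / 2 * ((p.1 0) ^ 2 + (p.1 1) ^ 2))) := by
  unfold pdt
  rw [pd_line _ (by fun_prop)]
  have hfun : (fun s : ℝ => (fun p : (Fin 3 → ℝ) × ℝ =>
      -(lam * Real.sin (lam * p.2 + r * p.1 2)
        * lag l (lam / 2 * ((p.1 0) ^ 2 + (p.1 1) ^ 2)))) (p + s • ((0 : Fin 3 → ℝ), (1:ℝ))))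
      = fun s : ℝ => -(lam * Real.sin (lam * (p.2 + s) + r * p.1 2)
        * lag l (lam / 2 * ((p.1 0) ^ 2 + (p.1 1) ^ 2))) := by
    funext s
    simp [Prod.fst_add, Prod.snd_add, Prod.smul_fst, Prod.smul_snd, smul_eq_mul]
  rw [hfun]
  have h1 : HasDerivAt (fun s : ℝ => lam * (p.2 + s) + r * p.1 2) lam 0 := by
    simpa using (((hasDerivAt_id (0:ℝ)).const_add p.2).const_mul lam).add_const (r * p.1 2)
  refine Eq.trans ((((h1.sin.const_mul lam).mul_const
    (lag l (lam / 2 * ((p.1 0) ^ 2 + (p.1 1) ^ 2)))).neg).deriv) ?_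
  ring_nf

lemma pdx2_fA (lam : ℝ) (l : ℕ) (r : ℝ) (p : (Fin 3 → ℝ) × ℝ) :
    pdx' 2 (fun p =>
      -(lam * Real.sin (lam * p.2 + r * p.1 2)
        * lag l (lam / 2 * ((p.1 0) ^ 2 + (p.1 1) ^ 2)))) p
      = -(lam * r * Real.cos (lam * p.2 + r * p.1 2)
        * lag l (lam / 2 * ((p.1 0) ^ 2 + (p.1 1) ^ 2))) := by
  unfold pdx'
  rw [pd_line _ (by fun_prop)]
  have hfun : (fun s : ℝ => (fun p : (Fin 3 → ℝ) × ℝ =>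
      -(lam * Real.sin (lam * p.2 + r * p.1 2)
        * lag l (lam / 2 * ((p.1 0) ^ 2 + (p.1 1) ^ 2))))
          (p + s • ((Pi.single 2 1 : Fin 3 → ℝ), (0:ℝ))))
      = fun s : ℝ => -(lam * Real.sin (lam * p.2 + r * (p.1 2 + s))
        * lag l (lam / 2 * ((p.1 0) ^ 2 + (p.1 1) ^ 2))) := by
    funext s
    simp [Prod.fst_add, Prod.snd_add, Prod.smul_fst, Prod.smul_snd, smul_eq_mul, Pi.single_apply]
  rw [hfun]
  have h1 : HasDerivAt (fun s : ℝ => lam * p.2 + r * (p.1 2 + s)) r 0 := by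
    simpa using ((((hasDerivAt_id (0:ℝ)).const_add (p.1 2)).const_mul r).const_add (lam * p.2))
  refine Eq.trans ((((h1.sin.const_mul lam).mul_const
    (lag l (lam / 2 * ((p.1 0) ^ 2 + (p.1 1) ^ 2)))).neg).deriv) ?_
  ring_nf

lemma pdx2_fB (lam : ℝ) (l : ℕ) (r : ℝ) (p : (Fin 3 → ℝ) × ℝ) :
    pdx' 2 (fun p =>
      -(r * Real.sin (lam * p.2 + r * p.1 2)
        * lag l (lam / 2 * ((p.1 0) ^ 2 + (p.1 1) ^ 2)))) p
      = -(r ^ 2 * Real.cos (lam * p.2 + r * p.1 2)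
        * lag l (lam / 2 * ((p.1 0) ^ 2 + (p.1 1) ^ 2))) := by
  unfold pdx'
  rw [pd_line _ (by fun_prop)]
  have hfun : (fun s : ℝ => (fun p : (Fin 3 → ℝ) × ℝ =>
      -(r * Real.sin (lam * p.2 + r * p.1 2)
        * lag l (lam / 2 * ((p.1 0) ^ 2 + (p.1 1) ^ 2))))
          (p + s • ((Pi.single 2 1 : Fin 3 → ℝ), (0:ℝ))))
      = fun s : ℝ => -(r * Real.sin (lam * p.2 + r * (p.1 2 + s))
        * lag l (lam / 2 * ((p.1 0) ^ 2 + (p.1 1) ^ 2))) := by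
    funext s
    simp [Prod.fst_add, Prod.snd_add, Prod.smul_fst, Prod.smul_snd, smul_eq_mul, Pi.single_apply]
  rw [hfun]
  have h1 : HasDerivAt (fun s : ℝ => lam * p.2 + r * (p.1 2 + s)) r 0 := by
    simpa using ((((hasDerivAt_id (0:ℝ)).const_add (p.1 2)).const_mul r).const_add (lam * p.2))
  refine Eq.trans ((((h1.sin.const_mul r).mul_const
    (lag l (lam / 2 * ((p.1 0) ^ 2 + (p.1 1) ^ 2)))).neg).deriv) ?_
  ring_nf

lemma pdx0_fE (lam : ℝ) (l : ℕ) (r : ℝ) (p : (Fin 3 → ℝ) × ℝ) :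
    pdx' 0 (fun p =>
      lam * p.1 0 * Real.cos (lam * p.2 + r * p.1 2)
          * lagD l (lam / 2 * ((p.1 0) ^ 2 + (p.1 1) ^ 2))
        + lam / 2 * p.1 1 * Real.sin (lam * p.2 + r * p.1 2)
          * lag l (lam / 2 * ((p.1 0) ^ 2 + (p.1 1) ^ 2))) p
      = lam * Real.cos (lam * p.2 + r * p.1 2)
          * lagD l (lam / 2 * ((p.1 0) ^ 2 + (p.1 1) ^ 2))
        + lam ^ 2 * (p.1 0) ^ 2 * Real.cos (lam * p.2 + r * p.1 2)
          * lagDD l (lam / 2 * ((p.1 0) ^ 2 + (p.1 1) ^ 2))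
        + lam ^ 2 / 2 * p.1 0 * p.1 1 * Real.sin (lam * p.2 + r * p.1 2)
          * lagD l (lam / 2 * ((p.1 0) ^ 2 + (p.1 1) ^ 2)) := by
  unfold pdx'
  rw [pd_line _ (by fun_prop)]
  have hfun : (fun s : ℝ => (fun p : (Fin 3 → ℝ) × ℝ =>
      lam * p.1 0 * Real.cos (lam * p.2 + r * p.1 2)
          * lagD l (lam / 2 * ((p.1 0) ^ 2 + (p.1 1) ^ 2))
        + lam / 2 * p.1 1 * Real.sin (lam * p.2 + r * p.1 2)
          * lag l (lam / 2 * ((p.1 0) ^ 2 + (p.1 1) ^ 2)))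
          (p + s • ((Pi.single 0 1 : Fin 3 → ℝ), (0:ℝ))))
      = fun s : ℝ =>
        lam * (p.1 0 + s) * Real.cos (lam * p.2 + r * p.1 2)
          * lagD l (lam / 2 * ((p.1 0 + s) ^ 2 + (p.1 1) ^ 2))
        + lam / 2 * p.1 1 * Real.sin (lam * p.2 + r * p.1 2)
          * lag l (lam / 2 * ((p.1 0 + s) ^ 2 + (p.1 1) ^ 2)) := by
    funext s
    simp [Prod.fst_add, Prod.snd_add, Prod.smul_fst, Prod.smul_snd, smul_eq_mul, Pi.single_apply]
  rw [hfun]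
  have hU : HasDerivAt (fun s : ℝ => lam / 2 * ((p.1 0 + s) ^ 2 + (p.1 1) ^ 2))
      (lam / 2 * (2 * (p.1 0 + 0) ^ 1 * 1)) 0 :=
    ((((hasDerivAt_id (0:ℝ)).const_add (p.1 0)).pow 2).add_const ((p.1 1)^2)).const_mul (lam/2)
  have hLD : HasDerivAt (fun s : ℝ => lagD l (lam / 2 * ((p.1 0 + s) ^ 2 + (p.1 1) ^ 2)))
      (lagDD l (lam / 2 * ((p.1 0 + 0) ^ 2 + (p.1 1) ^ 2)) * (lam / 2 * (2 * (p.1 0 + 0) ^ 1 * 1)))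
      0 := (hasDerivAt_lagD l _).comp 0 hU
  have hL : HasDerivAt (fun s : ℝ => lag l (lam / 2 * ((p.1 0 + s) ^ 2 + (p.1 1) ^ 2)))
      (lagD l (lam / 2 * ((p.1 0 + 0) ^ 2 + (p.1 1) ^ 2)) * (lam / 2 * (2 * (p.1 0 + 0) ^ 1 * 1)))
      0 := (hasDerivAt_lag l _).comp 0 hU
  have h1 : HasDerivAt (fun s : ℝ => lam * (p.1 0 + s)) (lam * 1) 0 :=
    ((hasDerivAt_id (0:ℝ)).const_add (p.1 0)).const_mul lam
  refine Eq.trans ((((h1.mul_const (Real.cos (lam * p.2 + r * p.1 2))).mul hLD).add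
    (hL.const_mul (lam / 2 * p.1 1 * Real.sin (lam * p.2 + r * p.1 2)))).deriv) ?_
  ring_nf

lemma pdt_fE (lam : ℝ) (l : ℕ) (r : ℝ) (p : (Fin 3 → ℝ) × ℝ) :
    pdt (fun p =>
      lam * p.1 0 * Real.cos (lam * p.2 + r * p.1 2)
          * lagD l (lam / 2 * ((p.1 0) ^ 2 + (p.1 1) ^ 2))
        + lam / 2 * p.1 1 * Real.sin (lam * p.2 + r * p.1 2)
          * lag l (lam / 2 * ((p.1 0) ^ 2 + (p.1 1) ^ 2))) p
      = -(lam ^ 2 * p.1 0 * Real.sin (lam * p.2 + r * p.1 2)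
          * lagD l (lam / 2 * ((p.1 0) ^ 2 + (p.1 1) ^ 2)))
        + lam ^ 2 / 2 * p.1 1 * Real.cos (lam * p.2 + r * p.1 2)
          * lag l (lam / 2 * ((p.1 0) ^ 2 + (p.1 1) ^ 2)) := by
  unfold pdt
  rw [pd_line _ (by fun_prop)]
  have hfun : (fun s : ℝ => (fun p : (Fin 3 → ℝ) × ℝ =>
      lam * p.1 0 * Real.cos (lam * p.2 + r * p.1 2)
          * lagD l (lam / 2 * ((p.1 0) ^ 2 + (p.1 1) ^ 2))
        + lam / 2 * p.1 1 * Real.sin (lam * p.2 + r * p.1 2)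
          * lag l (lam / 2 * ((p.1 0) ^ 2 + (p.1 1) ^ 2)))
          (p + s • ((0 : Fin 3 → ℝ), (1:ℝ))))
      = fun s : ℝ =>
        lam * p.1 0 * Real.cos (lam * (p.2 + s) + r * p.1 2)
          * lagD l (lam / 2 * ((p.1 0) ^ 2 + (p.1 1) ^ 2))
        + lam / 2 * p.1 1 * Real.sin (lam * (p.2 + s) + r * p.1 2)
          * lag l (lam / 2 * ((p.1 0) ^ 2 + (p.1 1) ^ 2)) := by
    funext s
    simp [Prod.fst_add, Prod.snd_add, Prod.smul_fst, Prod.smul_snd, smul_eq_mul]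
  rw [hfun]
  have h1 : HasDerivAt (fun s : ℝ => lam * (p.2 + s) + r * p.1 2) lam 0 := by
    simpa using (((hasDerivAt_id (0:ℝ)).const_add p.2).const_mul lam).add_const (r * p.1 2)
  refine Eq.trans ((((h1.cos.const_mul (lam * p.1 0)).mul_const
      (lagD l (lam / 2 * ((p.1 0) ^ 2 + (p.1 1) ^ 2)))).add
    ((h1.sin.const_mul (lam / 2 * p.1 1)).mul_const
      (lag l (lam / 2 * ((p.1 0) ^ 2 + (p.1 1) ^ 2))))).deriv) ?_
  ring_nf

lemma pdx1_fF (lam : ℝ) (l : ℕ) (r : ℝ) (p : (Fin 3 → ℝ) × ℝ) :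
    pdx' 1 (fun p =>
      lam * p.1 1 * Real.cos (lam * p.2 + r * p.1 2)
          * lagD l (lam / 2 * ((p.1 0) ^ 2 + (p.1 1) ^ 2))
        - lam / 2 * p.1 0 * Real.sin (lam * p.2 + r * p.1 2)
          * lag l (lam / 2 * ((p.1 0) ^ 2 + (p.1 1) ^ 2))) p
      = lam * Real.cos (lam * p.2 + r * p.1 2)
          * lagD l (lam / 2 * ((p.1 0) ^ 2 + (p.1 1) ^ 2))
        + lam ^ 2 * (p.1 1) ^ 2 * Real.cos (lam * p.2 + r * p.1 2)
          * lagDD l (lam / 2 * ((p.1 0) ^ 2 + (p.1 1) ^ 2))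
        - lam ^ 2 / 2 * p.1 0 * p.1 1 * Real.sin (lam * p.2 + r * p.1 2)
          * lagD l (lam / 2 * ((p.1 0) ^ 2 + (p.1 1) ^ 2)) := by
  unfold pdx'
  rw [pd_line _ (by fun_prop)]
  have hfun : (fun s : ℝ => (fun p : (Fin 3 → ℝ) × ℝ =>
      lam * p.1 1 * Real.cos (lam * p.2 + r * p.1 2)
          * lagD l (lam / 2 * ((p.1 0) ^ 2 + (p.1 1) ^ 2))
        - lam / 2 * p.1 0 * Real.sin (lam * p.2 + r * p.1 2)
          * lag l (lam / 2 * ((p.1 0) ^ 2 + (p.1 1) ^ 2)))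
          (p + s • ((Pi.single 1 1 : Fin 3 → ℝ), (0:ℝ))))
      = fun s : ℝ =>
        lam * (p.1 1 + s) * Real.cos (lam * p.2 + r * p.1 2)
          * lagD l (lam / 2 * ((p.1 0) ^ 2 + (p.1 1 + s) ^ 2))
        - lam / 2 * p.1 0 * Real.sin (lam * p.2 + r * p.1 2)
          * lag l (lam / 2 * ((p.1 0) ^ 2 + (p.1 1 + s) ^ 2)) := by
    funext s
    simp [Prod.fst_add, Prod.snd_add, Prod.smul_fst, Prod.smul_snd, smul_eq_mul, Pi.single_apply]
  rw [hfun]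
  have hU : HasDerivAt (fun s : ℝ => lam / 2 * ((p.1 0) ^ 2 + (p.1 1 + s) ^ 2))
      (lam / 2 * (2 * (p.1 1 + 0) ^ 1 * 1)) 0 := by
    have := ((((hasDerivAt_id (0:ℝ)).const_add (p.1 1)).pow 2).const_add
      ((p.1 0)^2)).const_mul (lam/2)
    simpa using this
  have hLD : HasDerivAt (fun s : ℝ => lagD l (lam / 2 * ((p.1 0) ^ 2 + (p.1 1 + s) ^ 2)))
      (lagDD l (lam / 2 * ((p.1 0) ^ 2 + (p.1 1 + 0) ^ 2)) * (lam / 2 * (2 * (p.1 1 + 0) ^ 1 * 1)))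
      0 := (hasDerivAt_lagD l _).comp 0 hU
  have hL : HasDerivAt (fun s : ℝ => lag l (lam / 2 * ((p.1 0) ^ 2 + (p.1 1 + s) ^ 2)))
      (lagD l (lam / 2 * ((p.1 0) ^ 2 + (p.1 1 + 0) ^ 2)) * (lam / 2 * (2 * (p.1 1 + 0) ^ 1 * 1)))
      0 := (hasDerivAt_lag l _).comp 0 hU
  have h1 : HasDerivAt (fun s : ℝ => lam * (p.1 1 + s)) (lam * 1) 0 :=
    ((hasDerivAt_id (0:ℝ)).const_add (p.1 1)).const_mul lam
  refine Eq.trans ((((h1.mul_const (Real.cos (lam * p.2 + r * p.1 2))).mul hLD).sub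
    (hL.const_mul (lam / 2 * p.1 0 * Real.sin (lam * p.2 + r * p.1 2)))).deriv) ?_
  ring_nf

lemma pdt_fF (lam : ℝ) (l : ℕ) (r : ℝ) (p : (Fin 3 → ℝ) × ℝ) :
    pdt (fun p =>
      lam * p.1 1 * Real.cos (lam * p.2 + r * p.1 2)
          * lagD l (lam / 2 * ((p.1 0) ^ 2 + (p.1 1) ^ 2))
        - lam / 2 * p.1 0 * Real.sin (lam * p.2 + r * p.1 2)
          * lag l (lam / 2 * ((p.1 0) ^ 2 + (p.1 1) ^ 2))) p
      = -(lam ^ 2 * p.1 1 * Real.sin (lam * p.2 + r * p.1 2)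
          * lagD l (lam / 2 * ((p.1 0) ^ 2 + (p.1 1) ^ 2)))
        - lam ^ 2 / 2 * p.1 0 * Real.cos (lam * p.2 + r * p.1 2)
          * lag l (lam / 2 * ((p.1 0) ^ 2 + (p.1 1) ^ 2)) := by
  unfold pdt
  rw [pd_line _ (by fun_prop)]
  have hfun : (fun s : ℝ => (fun p : (Fin 3 → ℝ) × ℝ =>
      lam * p.1 1 * Real.cos (lam * p.2 + r * p.1 2)
          * lagD l (lam / 2 * ((p.1 0) ^ 2 + (p.1 1) ^ 2))
        - lam / 2 * p.1 0 * Real.sin (lam * p.2 + r * p.1 2)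
          * lag l (lam / 2 * ((p.1 0) ^ 2 + (p.1 1) ^ 2)))
          (p + s • ((0 : Fin 3 → ℝ), (1:ℝ))))
      = fun s : ℝ =>
        lam * p.1 1 * Real.cos (lam * (p.2 + s) + r * p.1 2)
          * lagD l (lam / 2 * ((p.1 0) ^ 2 + (p.1 1) ^ 2))
        - lam / 2 * p.1 0 * Real.sin (lam * (p.2 + s) + r * p.1 2)
          * lag l (lam / 2 * ((p.1 0) ^ 2 + (p.1 1) ^ 2)) := by
    funext s
    simp [Prod.fst_add, Prod.snd_add, Prod.smul_fst, Prod.smul_snd, smul_eq_mul]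
  rw [hfun]
  have h1 : HasDerivAt (fun s : ℝ => lam * (p.2 + s) + r * p.1 2) lam 0 := by
    simpa using (((hasDerivAt_id (0:ℝ)).const_add p.2).const_mul lam).add_const (r * p.1 2)
  refine Eq.trans ((((h1.cos.const_mul (lam * p.1 1)).mul_const
      (lagD l (lam / 2 * ((p.1 0) ^ 2 + (p.1 1) ^ 2)))).sub
    ((h1.sin.const_mul (lam / 2 * p.1 0)).mul_const
      (lag l (lam / 2 * ((p.1 0) ^ 2 + (p.1 1) ^ 2))))).deriv) ?_
  ring_nf

/-- The eigenvalue equations for the regular bounded spherical functions of `(K' ⋉ N', K')`: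
`L'φ' = (λ(2l+1)+r²)φ'`, `Δ'φ' = λ²φ'`, `D'φ' = λrφ'`. -/
theorem statement19 :
    ∀ lam > (0:ℝ), ∀ l : ℕ, ∀ r : ℝ, ∀ p : (Fin 3 → ℝ) × ℝ,
      Lp (sph' lam l r) p = (lam * (2 * l + 1) + r ^ 2) * sph' lam l r p ∧
      Deltap (sph' lam l r) p = lam ^ 2 * sph' lam l r p ∧
      Dp (sph' lam l r) p = lam * r * sph' lam l r p := by
  intro lam _ l r p
  refine ⟨?_, ?_, ?_⟩
  · unfold _root_.Lp
    rw [X1_sph lam l r, X2_sph lam l r, pdx2_sph lam l r]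
    unfold X1' X2'
    rw [pdx0_fE lam l r p, pdt_fE lam l r p, pdx1_fF lam l r p, pdt_fF lam l r p,
      pdx2_fB lam l r p]
    unfold sph'
    linear_combination (-(2 * lam * Real.cos (lam * p.2 + r * p.1 2)))
      * lag_ode l (lam / 2 * ((p.1 0) ^ 2 + (p.1 1) ^ 2))
  · unfold Deltap
    rw [pdt_sph lam l r, pdt_fA lam l r p]
    unfold sph'
    ring
  · unfold Dp
    rw [pdt_sph lam l r, pdx2_fA lam l r p]
    unfold sph'
    ring
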